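/- arXiv:2602.10894 — 4 statements merged into one kernel-verified Lean document; each statement's English description precedes it below -/
import Mathlib

section
/- Let 𝒜 be a finite nonempty set, π a probability mass function on 𝒜 with π(a) > 0 for all a, Q : 𝒜 → ℝ, and α, β > 0. Then the probability mass function π'(a) = exp((Q(a) + β·log π(a))/(α+β)) / Z, where Z = Σ_{a∈𝒜} exp((Q(a) + β·log π(a))/(α+β)), maximizes over all probability mass functions ρ on 𝒜 the objective Σ_a ρ(a)Q(a) − β·D_KL(ρ‖π) + α·H(ρ). -/
open Real Finset

/-- The regularized objective: `∑ ρ(a)Q(a) − β·KL(ρ‖p) + α·H(ρ)`,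
with the conventions `0·log(0/p(a)) = 0` and `0·log 0 = 0`
(recall `Real.log 0 = 0` in Mathlib). -/
noncomputable def klentObjective {A : Type*} [Fintype A]
    (Q ρ p : A → ℝ) (α β : ℝ) : ℝ :=
  ∑ a, ρ a * Q a - β * (∑ a, ρ a * Real.log (ρ a / p a))
    + α * (-∑ a, ρ a * Real.log (ρ a))

theorem stmt0 {A : Type*} [Fintype A] [Nonempty A]
    (p : A → ℝ) (hppos : ∀ a, 0 < p a) (hpsum : ∑ a, p a = 1)
    (Q : A → ℝ) (α β : ℝ) (hα : 0 < α) (hβ : 0 < β)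
    (Z : ℝ) (hZ : Z = ∑ a, Real.exp ((Q a + β * Real.log (p a)) / (α + β)))
    (p' : A → ℝ)
    (hp' : ∀ a, p' a = Real.exp ((Q a + β * Real.log (p a)) / (α + β)) / Z) :
    ∀ ρ : A → ℝ, (∀ a, 0 ≤ ρ a) → (∑ a, ρ a = 1) →
      klentObjective Q ρ p α β ≤ klentObjective Q p' p α β := by
  have hZpos : 0 < Z := by
    rw [hZ]
    exact Finset.sum_pos (fun a _ => Real.exp_pos _) Finset.univ_nonempty
  have hαβ : (0:ℝ) < α + β := by linarith
  have hp'pos : ∀ a, 0 < p' a := fun a => by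
    rw [hp' a]; positivity
  have hp'sum : ∑ a, p' a = 1 := by
    simp only [hp']
    rw [← Finset.sum_div, ← hZ, div_self hZpos.ne']
  have hlogp' : ∀ a, Real.log (p' a)
      = (Q a + β * Real.log (p a)) / (α + β) - Real.log Z := by
    intro a
    rw [hp' a, Real.log_div (Real.exp_pos _).ne' hZpos.ne', Real.log_exp]
  -- key identity
  have key : ∀ (σ : A → ℝ), (∀ a, 0 ≤ σ a) → (∑ a, σ a = 1) →
      klentObjective Q σ p α β
        = (α + β) * Real.log Z + ∑ a, ((α + β) * (σ a * Real.log (p' a / σ a))) := by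
    intro σ hσ0 hσ1
    have h1 : (α + β) * Real.log Z = ∑ a, (α + β) * (σ a * Real.log Z) := by
      rw [← Finset.mul_sum, ← Finset.sum_mul, hσ1, one_mul]
    rw [h1]
    unfold klentObjective
    rw [Finset.mul_sum, mul_neg, Finset.mul_sum, ← Finset.sum_neg_distrib,
      ← Finset.sum_sub_distrib, ← Finset.sum_add_distrib, ← Finset.sum_add_distrib]
    refine Finset.sum_congr rfl fun a _ => ?_
    rcases eq_or_lt_of_le (hσ0 a) with h0 | hpos
    · simp [← h0]
    · rw [Real.log_div hpos.ne' (hppos a).ne', Real.log_div (hp'pos a).ne' hpos.ne',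
        hlogp' a]
      field_simp
      ring
  have hgibbs : ∀ (σ : A → ℝ), (∀ a, 0 ≤ σ a) → (∑ a, σ a = 1) →
      ∑ a, σ a * Real.log (p' a / σ a) ≤ 0 := by
    intro σ hσ0 hσ1
    have hle : ∀ a ∈ Finset.univ, σ a * Real.log (p' a / σ a) ≤ p' a - σ a := by
      intro a _
      rcases eq_or_lt_of_le (hσ0 a) with h0 | hpos
      · simp [← h0]; exact (hp'pos a).le
      · have hx : 0 < p' a / σ a := div_pos (hp'pos a) hpos
        have := Real.log_le_sub_one_of_pos hx
        calc σ a * Real.log (p' a / σ a) ≤ σ a * (p' a / σ a - 1) := by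
              exact mul_le_mul_of_nonneg_left this (hσ0 a)
          _ = p' a - σ a := by field_simp
    calc ∑ a, σ a * Real.log (p' a / σ a) ≤ ∑ a, (p' a - σ a) :=
          Finset.sum_le_sum hle
      _ = 0 := by rw [Finset.sum_sub_distrib, hp'sum, hσ1, sub_self]
  intro ρ hρ0 hρ1
  rw [key ρ hρ0 hρ1, key p' (fun a => (hp'pos a).le) hp'sum]
  have h2 : ∑ a, ((α+β) * (p' a * Real.log (p' a / p' a))) = 0 := by
    apply Finset.sum_eq_zero
    intro a _
    rw [div_self (hp'pos a).ne', Real.log_one]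
    ring
  rw [h2]
  have := hgibbs ρ hρ0 hρ1
  rw [← Finset.mul_sum]
  nlinarith
end

section
/- Let 𝒜 be a finite nonempty set, π a probability mass function on 𝒜 with π(a) > 0 for all a, Q : 𝒜 → ℝ, and α, β > 0. Define π'(a) ∝ exp((Q(a) + β·log π(a))/(α+β)). Then the optimal objective value satisfies Σ_a π'(a)Q(a) − β·D_KL(π'‖π) + α·H(π') = (α+β)·log Σ_a exp((Q(a) + β·log π(a))/(α+β)). -/
open Real Finset

theorem stmt3 {A : Type*} [Fintype A] [Nonempty A]
    (p : A → ℝ) (hppos : ∀ a, 0 < p a) (hpsum : ∑ a, p a = 1)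
    (Q : A → ℝ) (α β : ℝ) (hα : 0 < α) (hβ : 0 < β)
    (p' : A → ℝ)
    (hp' : ∀ a, p' a = Real.exp ((Q a + β * Real.log (p a)) / (α + β)) /
        ∑ b, Real.exp ((Q b + β * Real.log (p b)) / (α + β))) :
    ∑ a, p' a * Q a - β * (∑ a, p' a * Real.log (p' a / p a))
        + α * (-∑ a, p' a * Real.log (p' a))
      = (α + β) * Real.log (∑ a, Real.exp ((Q a + β * Real.log (p a)) / (α + β))) := by
  set f : A → ℝ := fun a => (Q a + β * Real.log (p a)) / (α + β) with hf
  set Z : ℝ := ∑ b, Real.exp (f b) with hZ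
  have hZpos : 0 < Z := Finset.sum_pos (fun b _ => Real.exp_pos _) Finset.univ_nonempty
  have hαβ : (0:ℝ) < α + β := by linarith
  have hlogp' : ∀ a, Real.log (p' a) = f a - Real.log Z := by
    intro a
    rw [hp' a, Real.log_div (Real.exp_ne_zero _) hZpos.ne', Real.log_exp]
  have hsum1 : ∑ a, p' a = 1 := by
    simp only [hp']
    rw [← Finset.sum_div, div_self hZpos.ne']
  have key : ∀ a, p' a * Q a - β * (p' a * Real.log (p' a / p a))
      + α * (-(p' a * Real.log (p' a))) = (α + β) * Real.log Z * p' a := by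
    intro a
    rw [Real.log_div (by rw [hp' a]; positivity) (hppos a).ne', hlogp' a, hf]
    field_simp
    ring
  calc ∑ a, p' a * Q a - β * (∑ a, p' a * Real.log (p' a / p a))
        + α * (-∑ a, p' a * Real.log (p' a))
      = ∑ a, (p' a * Q a - β * (p' a * Real.log (p' a / p a))
        + α * (-(p' a * Real.log (p' a)))) := by
        rw [Finset.sum_add_distrib, Finset.sum_sub_distrib, ← Finset.mul_sum,
          ← Finset.sum_neg_distrib, ← Finset.mul_sum]
    _ = ∑ a, (α + β) * Real.log Z * p' a := by
        exact Finset.sum_congr rfl fun a _ => key a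
    _ = (α + β) * Real.log Z := by rw [← Finset.mul_sum, hsum1, mul_one]
end

section
/- Let 𝒜 be a finite nonempty set, π a probability mass function with π(a) > 0 for all a, Q : 𝒜 → ℝ, α, β > 0, and π'(a) ∝ exp((Q(a) + β·log π(a))/(α+β)). Then for every probability mass function ρ on 𝒜, Σ_a ρ(a)Q(a) − β·D_KL(ρ‖π) + α·H(ρ) = (α+β)·(log Z − D_KL(ρ‖π')), where Z = Σ_a exp((Q(a)+β·log π(a))/(α+β)). In particular the regularized objective differs from its maximum by (α+β)·D_KL(ρ‖π'). -/
open Real Finset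

theorem stmt4 {A : Type*} [Fintype A] [Nonempty A]
    (p : A → ℝ) (hppos : ∀ a, 0 < p a) (hpsum : ∑ a, p a = 1)
    (Q : A → ℝ) (α β : ℝ) (hα : 0 < α) (hβ : 0 < β)
    (Z : ℝ) (hZ : Z = ∑ a, Real.exp ((Q a + β * Real.log (p a)) / (α + β)))
    (p' : A → ℝ)
    (hp' : ∀ a, p' a = Real.exp ((Q a + β * Real.log (p a)) / (α + β)) / Z) :
    ∀ ρ : A → ℝ, (∀ a, 0 ≤ ρ a) → (∑ a, ρ a = 1) →
      ∑ a, ρ a * Q a - β * (∑ a, ρ a * Real.log (ρ a / p a))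
          + α * (-∑ a, ρ a * Real.log (ρ a))
        = (α + β) * (Real.log Z - ∑ a, ρ a * Real.log (ρ a / p' a)) := by
  intro ρ hρ hρ1
  have hZpos : 0 < Z := by
    rw [hZ]; exact Finset.sum_pos (fun a _ => Real.exp_pos _) Finset.univ_nonempty
  have hab : α + β ≠ 0 := by positivity
  have hlogZ : Real.log Z = ∑ a, ρ a * Real.log Z := by
    rw [← Finset.sum_mul, hρ1, one_mul]
  rw [hlogZ]
  simp only [mul_neg, Finset.mul_sum, ← Finset.sum_neg_distrib, ← Finset.sum_sub_distrib,
    ← Finset.sum_add_distrib]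
  refine Finset.sum_congr rfl fun a _ => ?_
  by_cases h : ρ a = 0
  · simp [h]
  · have hlogp' : Real.log (p' a) = (Q a + β * Real.log (p a)) / (α + β) - Real.log Z := by
      rw [hp', Real.log_div (Real.exp_ne_zero _) hZpos.ne', Real.log_exp]
    have hp'pos : p' a ≠ 0 := by
      rw [hp']; positivity
    rw [Real.log_div h (hppos a).ne', Real.log_div h hp'pos, hlogp']
    field_simp
    ring
end

section
/- Let 𝒜 be a finite nonempty set, π a probability mass function with π(a) > 0 for all a, Q : 𝒜 → ℝ, α, β > 0, and π'(a) ∝ exp((Q(a)+β·log π(a))/(α+β)). Then Σ_a π'(a)Q(a) + α·H(π') − β·D_KL(π'‖π) ≥ Σ_a π(a)Q(a) + α·H(π); i.e., the regularized objective of π' is at least the entropy-regularized value of π itself (a policy-improvement property). -/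
open Real Finset

theorem stmt7 {A : Type*} [Fintype A] [Nonempty A]
    (p : A → ℝ) (hppos : ∀ a, 0 < p a) (hpsum : ∑ a, p a = 1)
    (Q : A → ℝ) (α β : ℝ) (hα : 0 < α) (hβ : 0 < β)
    (p' : A → ℝ)
    (hp' : ∀ a, p' a = Real.exp ((Q a + β * Real.log (p a)) / (α + β)) /
        ∑ b, Real.exp ((Q b + β * Real.log (p b)) / (α + β))) :
    ∑ a, p a * Q a + α * (-∑ a, p a * Real.log (p a))
      ≤ ∑ a, p' a * Q a + α * (-∑ a, p' a * Real.log (p' a))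
          - β * (∑ a, p' a * Real.log (p' a / p a)) := by
  set c := α + β with hc
  have hcpos : 0 < c := by positivity
  set Z := ∑ b, Real.exp ((Q b + β * Real.log (p b)) / c) with hZ
  have hZpos : 0 < Z := Finset.sum_pos (fun b _ => Real.exp_pos _) Finset.univ_nonempty
  have hp'pos : ∀ a, 0 < p' a := fun a => by
    rw [hp' a]; exact div_pos (Real.exp_pos _) hZpos
  have hp'sum : ∑ a, p' a = 1 := by
    simp only [hp']
    rw [← Finset.sum_div, div_self (ne_of_gt hZpos)]
  have hlogp' : ∀ a, Real.log (p' a) = (Q a + β * Real.log (p a)) / c - Real.log Z := by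
    intro a
    rw [hp' a, Real.log_div (Real.exp_ne_zero _) (ne_of_gt hZpos), Real.log_exp]
  have hQ : ∀ a, Q a = c * Real.log (p' a) - β * Real.log (p a) + c * Real.log Z := by
    intro a
    have := hlogp' a
    field_simp at this
    linarith
  have hlogdiv : ∀ a, Real.log (p' a / p a) = Real.log (p' a) - Real.log (p a) :=
    fun a => Real.log_div (ne_of_gt (hp'pos a)) (ne_of_gt (hppos a))
  -- KL(p ‖ p') ≥ 0, i.e. S ≤ 0
  have hS : ∑ a, p a * (Real.log (p' a) - Real.log (p a)) ≤ 0 := by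
    have hterm : ∀ a ∈ Finset.univ, p a * (Real.log (p' a) - Real.log (p a)) ≤ p' a - p a := by
      intro a _
      have hx : 0 < p' a / p a := div_pos (hp'pos a) (hppos a)
      have hlog := Real.log_le_sub_one_of_pos hx
      have h1 : Real.log (p' a) - Real.log (p a) = Real.log (p' a / p a) := (hlogdiv a).symm
      have h2 : p a * (p' a / p a - 1) = p' a - p a := by
        rw [mul_sub, mul_one, mul_div_cancel₀ _ (ne_of_gt (hppos a))]
      calc p a * (Real.log (p' a) - Real.log (p a))
          = p a * Real.log (p' a / p a) := by rw [h1]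
        _ ≤ p a * (p' a / p a - 1) := by
            exact mul_le_mul_of_nonneg_left hlog (le_of_lt (hppos a))
        _ = p' a - p a := h2
    calc ∑ a, p a * (Real.log (p' a) - Real.log (p a))
        ≤ ∑ a, (p' a - p a) := Finset.sum_le_sum hterm
      _ = 0 := by rw [Finset.sum_sub_distrib, hp'sum, hpsum]; ring
  -- LHS identity
  have e1 : ∑ a, p a * Q a + α * (-∑ a, p a * Real.log (p a))
      = c * (∑ a, p a * (Real.log (p' a) - Real.log (p a))) + c * Real.log Z * (∑ a, p a) := by
    have h1 : ∀ a, p a * Q a = c * (p a * (Real.log (p' a) - Real.log (p a)))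
        + c * Real.log Z * p a + α * (p a * Real.log (p a)) := fun a => by rw [hQ a]; ring
    simp only [h1]
    rw [Finset.sum_add_distrib, Finset.sum_add_distrib, ← Finset.mul_sum, ← Finset.mul_sum,
      ← Finset.mul_sum]
    ring
  -- RHS identity
  have e2 : ∑ a, p' a * Q a + α * (-∑ a, p' a * Real.log (p' a))
          - β * (∑ a, p' a * Real.log (p' a / p a))
      = c * Real.log Z * (∑ a, p' a) := by
    have h1 : ∀ a, p' a * Q a = c * Real.log Z * p' a + α * (p' a * Real.log (p' a))
        + β * (p' a * (Real.log (p' a) - Real.log (p a))) := fun a => by rw [hQ a]; ring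
    simp only [hlogdiv, h1]
    rw [Finset.sum_add_distrib, Finset.sum_add_distrib, ← Finset.mul_sum, ← Finset.mul_sum,
      ← Finset.mul_sum]
    ring
  rw [e1, e2, hpsum, hp'sum]
  nlinarith [mul_nonpos_of_nonneg_of_nonpos (le_of_lt hcpos) hS]
end
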